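/- For every Σ ∈ SPD(n) and every W ∈ Sym(n), the curve γ(t) := Exp_Σ(tW) satisfies: γ(t) ∈ SPD(n) (in particular γ(t) is invertible) for all t ∈ ℝ, γ is twice differentiable (entrywise) with γ(0) = Σ and γ'(0) = W, and γ''(t) = γ'(t)·γ(t)⁻¹·γ'(t) for all t ∈ ℝ. This is the geodesic equation of the affine-invariant metric, so t ↦ Exp_Σ(tW) is the affine-invariant geodesic from Σ with initial velocity W. -/

import Mathlib

open Matrix

attribute [local instance] Matrix.linftyOpNormedRing Matrix.linftyOpNormedAlgebra

/-- Congruence by an invertible matrix preserves positive definiteness (real case). -/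
lemma posDef_conj_aux {n : ℕ} {M B : Matrix (Fin n) (Fin n) ℝ} (hM : M.PosDef)
    (hB : IsUnit B) : (Bᵀ * M * B).PosDef := by
  have hMsymm : Mᵀ = M := by
    have := hM.isHermitian
    rwa [Matrix.IsHermitian, Matrix.conjTranspose_eq_transpose_of_trivial] at this
  refine Matrix.PosDef.of_dotProduct_mulVec_pos ?_ ?_
  · show (Bᵀ * M * B)ᴴ = _
    rw [Matrix.conjTranspose_eq_transpose_of_trivial]
    simp [Matrix.transpose_mul, hMsymm, Matrix.mul_assoc]
  · intro x hx
    have hBx : B *ᵥ x ≠ 0 := by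
      intro h
      exact hx (Matrix.mulVec_injective_iff_isUnit.2 hB (by simpa using h))
    have hkey : star x ⬝ᵥ ((Bᵀ * M * B) *ᵥ x) = star (B *ᵥ x) ⬝ᵥ (M *ᵥ (B *ᵥ x)) := by
      have hsx : star x = x := by funext i; simp
      have hsBx : star (B *ᵥ x) = B *ᵥ x := by funext i; simp
      rw [hsx, hsBx, Matrix.mul_assoc, ← Matrix.mulVec_mulVec,
        Matrix.dotProduct_mulVec, Matrix.vecMul_transpose, ← Matrix.mulVec_mulVec]
    rw [hkey]
    exact hM.dotProduct_mulVec_pos hBx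

/-- The curve `γ(t) = Exp_Σ(tW) = S · exp(S⁻¹ (tW) S⁻¹) · S` (with `S` the positive-definite
square root of `Σ ∈ SPD(n)` and `W ∈ Sym(n)`) stays in `SPD(n)` (in particular it is
invertible), is twice differentiable entrywise with `γ(0) = Σ`, `γ'(0) = W`, and satisfies the
geodesic equation `γ''(t) = γ'(t) γ(t)⁻¹ γ'(t)` of the affine-invariant metric: it is the
affine-invariant geodesic from `Σ` with initial velocity `W`. -/
theorem spd_geodesic (n : ℕ) (hn : 1 ≤ n) (Sg W S : Matrix (Fin n) (Fin n) ℝ)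
    (hSg : Sg.PosDef) (hW : W.IsSymm) (hS : S.PosDef) (hSS : S * S = Sg)
    (γ : ℝ → Matrix (Fin n) (Fin n) ℝ)
    (hγ : ∀ t : ℝ, γ t = S * NormedSpace.exp (S⁻¹ * (t • W) * S⁻¹) * S) :
    (∀ t : ℝ, (γ t).PosDef) ∧ (∀ t : ℝ, IsUnit (γ t)) ∧ γ 0 = Sg ∧
      ∃ γ' γ'' : ℝ → Matrix (Fin n) (Fin n) ℝ,
        (∀ (t : ℝ) (i j : Fin n), HasDerivAt (fun s : ℝ => γ s i j) (γ' t i j) t) ∧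
        (∀ (t : ℝ) (i j : Fin n), HasDerivAt (fun s : ℝ => γ' s i j) (γ'' t i j) t) ∧
        γ' 0 = W ∧
        ∀ t : ℝ, γ'' t = γ' t * (γ t)⁻¹ * γ' t := by
  classical
  set A : Matrix (Fin n) (Fin n) ℝ := S⁻¹ * W * S⁻¹ with hAdef
  have hSsymm : Sᵀ = S := by
    have := hS.isHermitian
    rwa [Matrix.IsHermitian, Matrix.conjTranspose_eq_transpose_of_trivial] at this
  have hdet : IsUnit S.det := hS.det_pos.ne'.isUnit
  have h1 : S * S⁻¹ = 1 := Matrix.mul_nonsing_inv S hdet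
  have h2 : S⁻¹ * S = 1 := Matrix.nonsing_inv_mul S hdet
  have hSinvsymm : (S⁻¹)ᵀ = S⁻¹ := by
    rw [Matrix.transpose_nonsing_inv, hSsymm]
  have hAsymm : A.IsSymm := by
    show Aᵀ = A
    rw [hAdef]
    simp [Matrix.transpose_mul, hSinvsymm, hW.eq, Matrix.mul_assoc]
  have hrw : ∀ t : ℝ, S⁻¹ * (t • W) * S⁻¹ = t • A := by
    intro t
    rw [hAdef]
    simp [Matrix.mul_smul, Matrix.smul_mul]
  have hγ2 : ∀ t : ℝ, γ t = S * NormedSpace.exp (t • A) * S := by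
    intro t; rw [hγ t, hrw t]
  -- positive definiteness of the exponential of a symmetric matrix
  have hexpPos : ∀ t : ℝ, (NormedSpace.exp (t • A)).PosDef := by
    intro t
    have hhalfsymm : ((t / 2) • A).IsSymm := hAsymm.smul _
    have hEsymm : (NormedSpace.exp ((t / 2) • A))ᵀ = NormedSpace.exp ((t / 2) • A) :=
      hhalfsymm.exp
    have hsplit : NormedSpace.exp (t • A) =
        (NormedSpace.exp ((t / 2) • A))ᵀ * 1 * NormedSpace.exp ((t / 2) • A) := by
      rw [hEsymm, Matrix.mul_one, ← Matrix.exp_add_of_commute _ _ (Commute.refl _),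
        ← add_smul]
      norm_num
    rw [hsplit]
    exact posDef_conj_aux Matrix.PosDef.one (Matrix.isUnit_exp _)
  have hpos : ∀ t : ℝ, (γ t).PosDef := by
    intro t
    rw [hγ2 t]
    have := posDef_conj_aux (hexpPos t) hS.isUnit
    rwa [hSsymm] at this
  have hunit : ∀ t : ℝ, IsUnit (γ t) := fun t => (hpos t).isUnit
  have hzero : γ 0 = Sg := by
    rw [hγ2 0, zero_smul, NormedSpace.exp_zero, Matrix.mul_one, hSS]
  refine ⟨hpos, hunit, hzero, ?_⟩
  -- the derivatives
  set γ' : ℝ → Matrix (Fin n) (Fin n) ℝ :=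
    fun t => S * NormedSpace.exp (t • A) * (A * S) with hγ'def
  set γ'' : ℝ → Matrix (Fin n) (Fin n) ℝ :=
    fun t => S * (NormedSpace.exp (t • A) * A) * (A * S) with hγ''def
  refine ⟨γ', γ'', ?_, ?_, ?_, ?_⟩
  · -- first derivative, entrywise
    intro t i j
    have hd : HasDerivAt (fun s : ℝ => γ s) (γ' t) t := by
      have h := hasDerivAt_exp_smul_const (𝕂 := ℝ) A t
      have h2' : HasDerivAt (fun s : ℝ => S * NormedSpace.exp (s • A) * S)
          (S * (NormedSpace.exp (t • A) * A) * S) t := (h.const_mul S).mul_const S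
      have h3 : HasDerivAt (fun s : ℝ => γ s)
          (S * (NormedSpace.exp (t • A) * A) * S) t :=
        h2'.congr_of_eventuallyEq (Filter.Eventually.of_forall fun s => (hγ2 s))
      have : S * (NormedSpace.exp (t • A) * A) * S = γ' t := by
        rw [hγ'def]; simp only [Matrix.mul_assoc]
      rwa [this] at h3
    exact (LinearMap.toContinuousLinearMap
        { toFun := fun M => M i j, map_add' := fun _ _ => rfl, map_smul' := fun _ _ => rfl
          : Matrix (Fin n) (Fin n) ℝ →ₗ[ℝ] ℝ }).hasFDerivAt.comp_hasDerivAt t hd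
  · -- second derivative, entrywise
    intro t i j
    have hd : HasDerivAt (fun s : ℝ => γ' s) (γ'' t) t := by
      have h := hasDerivAt_exp_smul_const (𝕂 := ℝ) A t
      exact (h.const_mul S).mul_const (A * S)
    exact (LinearMap.toContinuousLinearMap
        { toFun := fun M => M i j, map_add' := fun _ _ => rfl, map_smul' := fun _ _ => rfl
          : Matrix (Fin n) (Fin n) ℝ →ₗ[ℝ] ℝ }).hasFDerivAt.comp_hasDerivAt t hd
  · -- γ' 0 = W
    rw [hγ'def]
    simp only [zero_smul, NormedSpace.exp_zero, Matrix.mul_one, hAdef]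
    calc S * (S⁻¹ * W * S⁻¹ * S) = S * (S⁻¹ * (W * (S⁻¹ * S))) := by
          simp only [Matrix.mul_assoc]
      _ = S * S⁻¹ * W := by rw [h2, Matrix.mul_one, Matrix.mul_assoc]
      _ = W := by rw [h1, Matrix.one_mul]
  · -- geodesic equation
    intro t
    have h1' : ∀ X : Matrix (Fin n) (Fin n) ℝ, S * (S⁻¹ * X) = X := fun X => by
      rw [← Matrix.mul_assoc, h1, Matrix.one_mul]
    have h2' : ∀ X : Matrix (Fin n) (Fin n) ℝ, S⁻¹ * (S * X) = X := fun X => by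
      rw [← Matrix.mul_assoc, h2, Matrix.one_mul]
    have hFE : NormedSpace.exp (-(t • A)) * NormedSpace.exp (t • A) = 1 := by
      rw [← Matrix.exp_add_of_commute _ _ ((Commute.refl (t • A)).neg_left), neg_add_cancel,
        NormedSpace.exp_zero]
    have hEF : NormedSpace.exp (t • A) * NormedSpace.exp (-(t • A)) = 1 := by
      rw [← Matrix.exp_add_of_commute _ _ ((Commute.refl (t • A)).neg_right), add_neg_cancel,
        NormedSpace.exp_zero]
    have hFE' : ∀ X : Matrix (Fin n) (Fin n) ℝ,
        NormedSpace.exp (-(t • A)) * (NormedSpace.exp (t • A) * X) = X := fun X => by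
      rw [← Matrix.mul_assoc, hFE, Matrix.one_mul]
    have hinv : (γ t)⁻¹ = S⁻¹ * NormedSpace.exp (-(t • A)) * S⁻¹ := by
      apply Matrix.inv_eq_right_inv
      rw [hγ2 t]
      calc S * NormedSpace.exp (t • A) * S * (S⁻¹ * NormedSpace.exp (-(t • A)) * S⁻¹)
          = S * (NormedSpace.exp (t • A) *
              (S * (S⁻¹ * (NormedSpace.exp (-(t • A)) * S⁻¹)))) := by
            simp only [Matrix.mul_assoc]
        _ = S * (NormedSpace.exp (t • A) * (NormedSpace.exp (-(t • A)) * S⁻¹)) := by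
            rw [h1' (NormedSpace.exp (-(t • A)) * S⁻¹)]
        _ = S * ((NormedSpace.exp (t • A) * NormedSpace.exp (-(t • A))) * S⁻¹) := by
            rw [Matrix.mul_assoc]
        _ = 1 := by rw [hEF, Matrix.one_mul, h1]
    rw [hinv, hγ'def, hγ''def]
    simp only [Matrix.mul_assoc]
    rw [h2', hFE', h1']
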